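/- For every integer a ≥ 1 and n ≥ 1, the radius of the metallic cube Π^a_n equals ⌊a/2⌋·⌈n/2⌉ + ⌈a/2⌉·⌊n/2⌋. Moreover, the constant string ε̂ = εε⋯ε with ε = ⌊a/2⌋ attains this radius, i.e., its eccentricity equals ⌊a/2⌋·⌈n/2⌉ + ⌈a/2⌉·⌊n/2⌋. -/

import Mathlib

/-- Strings of length `n` over the alphabet `{0,1,…,a}` in which the letter `a`
occurs only immediately after a `0` (i.e. `a` appears only inside blocks `0a`). -/
def MetallicOK (a n : ℕ) (α : Fin n → Fin (a + 1)) : Prop :=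
  ∀ i : Fin n, (α i : ℕ) = a →
    ∃ j : Fin n, (j : ℕ) + 1 = (i : ℕ) ∧ (α j : ℕ) = 0

instance (a n : ℕ) : DecidablePred (MetallicOK a n) := fun α => by
  unfold MetallicOK; infer_instance

/-- Vertices of the metallic cube `Π^a_n`. -/
abbrev MetallicVertex (a n : ℕ) : Type :=
  {α : Fin n → Fin (a + 1) // MetallicOK a n α}

/-- The metallic cube `Π^a_n`: two strings are adjacent iff `Σ_i |α_i - β_i| = 1`. -/
def metallicCube (a n : ℕ) : SimpleGraph (MetallicVertex a n) where
  Adj u v := (∑ i : Fin n, Nat.dist (u.1 i : ℕ) (v.1 i : ℕ)) = 1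
  symm := by
    constructor
    intro u v h
    simpa [Nat.dist_comm] using h
  loopless := by
    constructor
    intro u h
    simp [Nat.dist_self] at h

instance (a n : ℕ) : DecidableRel (metallicCube a n).Adj := fun u v =>
  inferInstanceAs (Decidable ((∑ i : Fin n, Nat.dist (u.1 i : ℕ) (v.1 i : ℕ)) = 1))

/-- The eccentricity of a vertex of the metallic cube: the maximum distance
from `v` to any vertex. -/
noncomputable def ecc (a n : ℕ) (v : MetallicVertex a n) : ℕ :=
  Finset.univ.sup fun u => (metallicCube a n).dist v u

namespace MetallicAux

lemma ndist (x y : ℕ) : Nat.dist x y = x - y + (y - x) := rfl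

variable {a n : ℕ}

/-- The ℓ¹ distance between two strings. -/
def L1 (u v : Fin n → Fin (a + 1)) : ℕ := ∑ i : Fin n, Nat.dist (u i : ℕ) (v i : ℕ)

lemma L1_self (u : Fin n → Fin (a + 1)) : L1 u u = 0 := by
  simp [L1, Nat.dist_self]

lemma L1_triangle (u v w : Fin n → Fin (a + 1)) : L1 u w ≤ L1 u v + L1 v w := by
  rw [L1, L1, L1, ← Finset.sum_add_distrib]
  exact Finset.sum_le_sum fun i _ => Nat.dist.triangle_inequality _ _ _

lemma L1_le_length {u v : MetallicVertex a n} (p : (metallicCube a n).Walk u v) :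
    L1 u.1 v.1 ≤ p.length := by
  induction p with
  | nil => simp [L1_self]
  | @cons u w v h p ih =>
    have h1 : L1 u.1 w.1 = 1 := h
    calc L1 u.1 v.1 ≤ L1 u.1 w.1 + L1 w.1 v.1 := L1_triangle _ _ _
      _ ≤ 1 + p.length := by omega
      _ = (SimpleGraph.Walk.cons h p).length := by
          rw [SimpleGraph.Walk.length_cons]; omega

lemma L1_le_dist {u v : MetallicVertex a n} (h : (metallicCube a n).Reachable u v) :
    L1 u.1 v.1 ≤ (metallicCube a n).dist u v := by
  obtain ⟨p, hp⟩ := h.exists_walk_length_eq_dist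
  exact hp ▸ L1_le_length p

lemma sum_dist_update (c u : Fin n → Fin (a + 1)) (i : Fin n) (b : Fin (a + 1)) :
    L1 c (Function.update u i b) + Nat.dist (c i : ℕ) (u i : ℕ)
      = L1 c u + Nat.dist (c i : ℕ) (b : ℕ) := by
  have key : ∀ (w : Fin n → Fin (a + 1)),
      L1 c w = Nat.dist (c i : ℕ) (w i : ℕ)
        + ∑ j ∈ Finset.univ.erase i, Nat.dist (c j : ℕ) (w j : ℕ) := by
    intro w
    rw [L1, ← Finset.add_sum_erase _ _ (Finset.mem_univ i)]
  rw [key, key]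
  have heq : ∑ j ∈ Finset.univ.erase i, Nat.dist (c j : ℕ) ((Function.update u i b) j : ℕ)
       = ∑ j ∈ Finset.univ.erase i, Nat.dist (c j : ℕ) (u j : ℕ) := by
    refine Finset.sum_congr rfl fun j hj => ?_
    rw [Function.update_of_ne (Finset.ne_of_mem_erase hj)]
  rw [heq, Function.update_self]
  ring

/-- From the all-`⌊a/2⌋` string one can reach any vertex by a walk of length `L1`. -/
lemma exists_walk_eps (ha : 1 ≤ a) (c : MetallicVertex a n)
    (hc : ∀ i, (c.1 i : ℕ) = a / 2) (u : MetallicVertex a n) :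
    ∃ p : (metallicCube a n).Walk c u, p.length = L1 c.1 u.1 := by
  generalize hL : L1 c.1 u.1 = L
  induction L using Nat.strong_induction_on generalizing u with
  | _ L ih =>
    rcases Nat.eq_zero_or_pos L with h0 | hpos
    · subst h0
      have hcu : c = u := by
        refine Subtype.ext (funext fun i => Fin.ext ?_)
        have hall : ∀ j ∈ Finset.univ, Nat.dist (c.1 j : ℕ) (u.1 j : ℕ) = 0 := by
          rw [← Finset.sum_eq_zero_iff]
          exact hL
        have := hall i (Finset.mem_univ i)
        rw [ndist] at this
        omega
      subst hcu
      exact ⟨SimpleGraph.Walk.nil, rfl⟩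
    · -- find a coordinate to move
      have hne : ∃ i, (u.1 i : ℕ) ≠ a / 2 := by
        by_contra hall
        push_neg at hall
        have : L1 c.1 u.1 = 0 :=
          Finset.sum_eq_zero fun i _ => by rw [hc i, hall i, Nat.dist_self]
        omega
      by_cases hbig : ∃ i, a / 2 < (u.1 i : ℕ)
      · obtain ⟨i, hi⟩ := hbig
        have hia : (u.1 i : ℕ) ≤ a := Nat.lt_succ_iff.mp (u.1 i).isLt
        set b : Fin (a + 1) := ⟨(u.1 i : ℕ) - 1, by omega⟩ with hb
        have hbval : (b : ℕ) = (u.1 i : ℕ) - 1 := rfl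
        set w : Fin n → Fin (a + 1) := Function.update u.1 i b with hw
        have hwok : MetallicOK a n w := by
          intro j hj
          by_cases hji : j = i
          · subst hji
            rw [hw, Function.update_self, hbval] at hj
            omega
          · rw [hw, Function.update_of_ne hji] at hj
            obtain ⟨k, hk1, hk0⟩ := u.2 j hj
            refine ⟨k, hk1, ?_⟩
            have hki : k ≠ i := by
              rintro rfl
              omega
            rw [hw, Function.update_of_ne hki]
            exact hk0
        have hadjsum : L1 u.1 w = 1 := by
          have := sum_dist_update u.1 u.1 i b
          rw [← hw, L1_self, Nat.dist_self] at this
          have hdb : Nat.dist (u.1 i : ℕ) (b : ℕ) = 1 := by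
            rw [hbval, ndist]; omega
          omega
        have hadj : (metallicCube a n).Adj ⟨w, hwok⟩ u :=
          (metallicCube a n).adj_symm (by exact hadjsum)
        have hL1w : L1 c.1 w = L - 1 := by
          have := sum_dist_update c.1 u.1 i b
          rw [← hw] at this
          have h1 : Nat.dist (c.1 i : ℕ) (u.1 i : ℕ) = (u.1 i : ℕ) - a / 2 := by
            rw [hc i, ndist]; omega
          have h2 : Nat.dist (c.1 i : ℕ) (b : ℕ) = (u.1 i : ℕ) - 1 - a / 2 := by
            rw [hc i, hbval, ndist]; omega
          omega
        obtain ⟨p, hp⟩ := ih (L - 1) (by omega) ⟨w, hwok⟩ hL1w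
        refine ⟨p.concat hadj, ?_⟩
        rw [SimpleGraph.Walk.length_concat, hp]
        omega
      · push_neg at hbig
        obtain ⟨i, hi⟩ := hne
        have hilt : (u.1 i : ℕ) < a / 2 := lt_of_le_of_ne (hbig i) hi
        have hεa : a / 2 < a := Nat.div_lt_self ha one_lt_two
        set b : Fin (a + 1) := ⟨(u.1 i : ℕ) + 1, by omega⟩ with hb
        have hbval : (b : ℕ) = (u.1 i : ℕ) + 1 := rfl
        set w : Fin n → Fin (a + 1) := Function.update u.1 i b with hw
        have hwok : MetallicOK a n w := by
          intro j hj
          exfalso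
          by_cases hji : j = i
          · subst hji
            rw [hw, Function.update_self, hbval] at hj
            omega
          · rw [hw, Function.update_of_ne hji] at hj
            have := hbig j
            omega
        have hadjsum : L1 u.1 w = 1 := by
          have := sum_dist_update u.1 u.1 i b
          rw [← hw, L1_self, Nat.dist_self] at this
          have hdb : Nat.dist (u.1 i : ℕ) (b : ℕ) = 1 := by
            rw [hbval, ndist]; omega
          omega
        have hadj : (metallicCube a n).Adj ⟨w, hwok⟩ u :=
          (metallicCube a n).adj_symm (by exact hadjsum)
        have hL1w : L1 c.1 w = L - 1 := by
          have := sum_dist_update c.1 u.1 i b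
          rw [← hw] at this
          have h1 : Nat.dist (c.1 i : ℕ) (u.1 i : ℕ) = a / 2 - (u.1 i : ℕ) := by
            rw [hc i, ndist]; omega
          have h2 : Nat.dist (c.1 i : ℕ) (b : ℕ) = a / 2 - ((u.1 i : ℕ) + 1) := by
            rw [hc i, hbval, ndist]; omega
          omega
        obtain ⟨p, hp⟩ := ih (L - 1) (by omega) ⟨w, hwok⟩ hL1w
        refine ⟨p.concat hadj, ?_⟩
        rw [SimpleGraph.Walk.length_concat, hp]
        omega

/-- Upper bound: the ℓ¹ distance from the constant `⌊a/2⌋` string to any valid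
string is at most the formula. -/
lemma L1_le_formula (u : Fin n → Fin (a + 1)) (hu : MetallicOK a n u) :
    (∑ i : Fin n, Nat.dist (a / 2) (u i : ℕ))
      ≤ a / 2 * ((n + 1) / 2) + (a + 1) / 2 * (n / 2) := by
  set f : ℕ → ℕ := fun i => if h : i < n then Nat.dist (a / 2) (u ⟨i, h⟩ : ℕ) else 0 with hf
  have hfval : ∀ (i : ℕ) (h : i < n), f i = Nat.dist (a / 2) (u ⟨i, h⟩ : ℕ) := by
    intro i h
    simp only [hf, dif_pos h]
  have key : ∀ k, k ≤ n →
      (∑ i ∈ Finset.range k, f i) ≤ a / 2 * ((k + 1) / 2) + (a + 1) / 2 * (k / 2) := by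
    intro k
    induction k using Nat.strong_induction_on with
    | _ k ih =>
      match k with
      | 0 => intro _; simp
      | (k + 1) =>
        intro hkn
        have hk : k < n := hkn
        by_cases hA : (u ⟨k, hk⟩ : ℕ) = a
        · obtain ⟨j, hj1, hj0⟩ := hu ⟨k, hk⟩ hA
          have hKj : (j : ℕ) + 1 = k := hj1
          have hjn : (j : ℕ) < n := j.isLt
          have hj1n : (j : ℕ) + 1 < n := by omega
          rw [show k + 1 = (j : ℕ) + 2 from by omega, Finset.sum_range_succ,
            Finset.sum_range_succ]
          have hfj : f (j : ℕ) = a / 2 := by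
            rw [hfval _ hjn]
            have : (⟨(j : ℕ), hjn⟩ : Fin n) = j := Fin.ext rfl
            rw [this, hj0, Nat.dist_zero_right]
          have hfj1 : f ((j : ℕ) + 1) = (a + 1) / 2 := by
            rw [hfval _ hj1n]
            have : (⟨(j : ℕ) + 1, hj1n⟩ : Fin n) = ⟨k, hk⟩ := Fin.ext hKj
            rw [this, hA, ndist]
            omega
          have hIH := ih (j : ℕ) (by omega) (by omega)
          have e1 : ((j : ℕ) + 2 + 1) / 2 = ((j : ℕ) + 1) / 2 + 1 := by omega
          have e2 : ((j : ℕ) + 2) / 2 = (j : ℕ) / 2 + 1 := by omega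
          rw [hfj, hfj1, e1, e2, Nat.mul_succ, Nat.mul_succ]
          have hsum : a / 2 + (a + 1) / 2 = a := by omega
          linarith
        · rw [Finset.sum_range_succ]
          have hfk : f k ≤ a / 2 := by
            rw [hfval _ hk, ndist]
            have h1 : (u ⟨k, hk⟩ : ℕ) < a + 1 := (u ⟨k, hk⟩).isLt
            omega
          have hIH := ih k (by omega) (by omega)
          have hεδ : a / 2 ≤ (a + 1) / 2 := by omega
          rcases Nat.even_or_odd k with he | ho
          · have e1 : (k + 1 + 1) / 2 = k / 2 + 1 := by omega
            have e2 : (k + 1) / 2 = k / 2 := by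
              rcases he with ⟨m, hm⟩; omega
            rw [e1, e2, Nat.mul_succ]
            rw [e2] at hIH
            linarith
          · have e2 : (k + 1) / 2 = k / 2 + 1 := by
              rcases ho with ⟨m, hm⟩; omega
            have e1 : (k + 1 + 1) / 2 = (k + 1) / 2 := by
              rcases ho with ⟨m, hm⟩; omega
            rw [e2] at hIH
            rw [e1, e2, Nat.mul_succ, Nat.mul_succ]
            rw [Nat.mul_succ] at hIH
            linarith
  have hconv : (∑ i : Fin n, Nat.dist (a / 2) (u i : ℕ)) = ∑ i ∈ Finset.range n, f i := by
    rw [← Fin.sum_univ_eq_sum_range]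
    refine Finset.sum_congr rfl fun i _ => ?_
    rw [hfval _ i.isLt]
  rw [hconv]
  exact key n le_rfl

/-- A far-away valid string from a given string `v`. -/
def far (a n : ℕ) (v : Fin n → Fin (a + 1)) : Fin n → Fin (a + 1) := fun i =>
  if _ : (i : ℕ) % 2 = 1 then
    (if (v i : ℕ) ≤ (v ⟨(i : ℕ) - 1, by omega⟩ : ℕ) then
      ⟨a, Nat.lt_succ_self a⟩ else ⟨0, Nat.succ_pos a⟩)
  else
    if h2 : (i : ℕ) + 1 < n then
      (if (v ⟨(i : ℕ) + 1, h2⟩ : ℕ) ≤ (v i : ℕ) then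
        ⟨0, Nat.succ_pos a⟩ else ⟨a - 1, by omega⟩)
    else
      (if a / 2 ≤ (v i : ℕ) then ⟨0, Nat.succ_pos a⟩ else ⟨a - 1, by omega⟩)

lemma far_ok (ha : 1 ≤ a) (v : Fin n → Fin (a + 1)) : MetallicOK a n (far a n v) := by
  intro i hi
  unfold far at hi
  by_cases h1 : (i : ℕ) % 2 = 1
  · rw [dif_pos h1] at hi
    have hi1 : 1 ≤ (i : ℕ) := by omega
    have hjn : (i : ℕ) - 1 < n := by have := i.isLt; omega
    by_cases hge : (v i : ℕ) ≤ (v ⟨(i : ℕ) - 1, hjn⟩ : ℕ)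
    · refine ⟨⟨(i : ℕ) - 1, hjn⟩, by simp only [Fin.val_mk]; omega, ?_⟩
      unfold far
      rw [dif_neg (by simp only [Fin.val_mk]; omega)]
      have h2 : ((⟨(i : ℕ) - 1, hjn⟩ : Fin n) : ℕ) + 1 < n := by
        have := i.isLt; simp only [Fin.val_mk]; omega
      rw [dif_pos h2]
      have he : (⟨((⟨(i : ℕ) - 1, hjn⟩ : Fin n) : ℕ) + 1, h2⟩ : Fin n) = i := by
        apply Fin.ext; simp only [Fin.val_mk]; omega
      rw [he, if_pos hge]
    · rw [if_neg hge] at hi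
      simp only [Fin.val_mk] at hi
      omega
  · rw [dif_neg h1] at hi
    exfalso
    by_cases h2 : (i : ℕ) + 1 < n
    · rw [dif_pos h2] at hi
      split at hi <;> simp only [Fin.val_mk] at hi <;> omega
    · rw [dif_neg h2] at hi
      split at hi <;> simp only [Fin.val_mk] at hi <;> omega

lemma far_low (ha : 1 ≤ a) (v : Fin n → Fin (a + 1)) :
    a / 2 * ((n + 1) / 2) + (a + 1) / 2 * (n / 2)
      ≤ ∑ i : Fin n, Nat.dist (v i : ℕ) (far a n v i : ℕ) := by
  set g : ℕ → ℕ :=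
    fun i => if h : i < n then Nat.dist (v ⟨i, h⟩ : ℕ) (far a n v ⟨i, h⟩ : ℕ) else 0 with hg
  have hgval : ∀ (i : ℕ) (h : i < n),
      g i = Nat.dist (v ⟨i, h⟩ : ℕ) (far a n v ⟨i, h⟩ : ℕ) := by
    intro i h
    simp only [hg, dif_pos h]
  -- the pair bound
  have pair : ∀ m : ℕ, 2 * m + 1 < n → a ≤ g (2 * m) + g (2 * m + 1) := by
    intro m hm
    have hm0 : 2 * m < n := by omega
    rw [hgval _ hm0, hgval _ hm]
    set x := (v ⟨2 * m, hm0⟩ : ℕ) with hx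
    set y := (v ⟨2 * m + 1, hm⟩ : ℕ) with hy
    have hxa : x < a + 1 := (v ⟨2 * m, hm0⟩).isLt
    have hya : y < a + 1 := (v ⟨2 * m + 1, hm⟩).isLt
    have hfar0 : far a n v ⟨2 * m, hm0⟩ =
        (if y ≤ x then (⟨0, Nat.succ_pos a⟩ : Fin (a + 1)) else ⟨a - 1, by omega⟩) := by
      unfold far
      rw [dif_neg (by simp only [Fin.val_mk]; omega)]
      rw [dif_pos (show ((⟨2 * m, hm0⟩ : Fin n) : ℕ) + 1 < n from hm)]
    have hfar1 : far a n v ⟨2 * m + 1, hm⟩ =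
        (if y ≤ x then (⟨a, Nat.lt_succ_self a⟩ : Fin (a + 1)) else ⟨0, Nat.succ_pos a⟩) := by
      unfold far
      rw [dif_pos (by simp only [Fin.val_mk]; omega)]
      have he : (⟨((⟨2 * m + 1, hm⟩ : Fin n) : ℕ) - 1, by omega⟩ : Fin n) = ⟨2 * m, hm0⟩ := by
        apply Fin.ext; simp only [Fin.val_mk]; omega
      rw [he]
    rw [hfar0, hfar1]
    by_cases hxy : y ≤ x
    · rw [if_pos hxy, if_pos hxy]
      simp only [ndist, Fin.val_mk]
      omega
    · rw [if_neg hxy, if_neg hxy]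
      simp only [ndist, Fin.val_mk]
      omega
  have even_bound : ∀ m : ℕ, 2 * m ≤ n → a * m ≤ ∑ i ∈ Finset.range (2 * m), g i := by
    intro m
    induction m with
    | zero => simp
    | succ m ihm =>
      intro hm
      have h1 : 2 * m ≤ n := by omega
      have h2 : 2 * m + 1 < n := by omega
      have := ihm h1
      have := pair m h2
      rw [show 2 * (m + 1) = (2 * m + 1) + 1 from by omega, Finset.sum_range_succ,
        Finset.sum_range_succ, Nat.mul_succ]
      omega
  have hconv : (∑ i : Fin n, Nat.dist (v i : ℕ) (far a n v i : ℕ))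
      = ∑ i ∈ Finset.range n, g i := by
    rw [← Fin.sum_univ_eq_sum_range]
    refine Finset.sum_congr rfl fun i _ => ?_
    rw [hgval _ i.isLt]
  rw [hconv]
  rcases Nat.even_or_odd n with he | ho
  · obtain ⟨m, hm⟩ := he
    have hn2 : n = 2 * m := by omega
    have e1 : (n + 1) / 2 = m := by omega
    have e2 : n / 2 = m := by omega
    rw [e1, e2, ← Nat.add_mul]
    have hsum : a / 2 + (a + 1) / 2 = a := by omega
    rw [hsum]
    rw [hn2]
    exact even_bound m (by omega)
  · obtain ⟨m, hm⟩ := ho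
    have e1 : (n + 1) / 2 = m + 1 := by omega
    have e2 : n / 2 = m := by omega
    have hlast : 2 * m < n := by omega
    have hglast : a / 2 ≤ g (2 * m) := by
      rw [hgval _ hlast]
      have hfar : far a n v ⟨2 * m, hlast⟩ =
          (if a / 2 ≤ (v ⟨2 * m, hlast⟩ : ℕ) then (⟨0, Nat.succ_pos a⟩ : Fin (a + 1))
            else ⟨a - 1, by omega⟩) := by
        unfold far
        rw [dif_neg (by simp only [Fin.val_mk]; omega),
          dif_neg (by simp only [Fin.val_mk]; omega)]
      rw [hfar]
      have hva : (v ⟨2 * m, hlast⟩ : ℕ) < a + 1 := (v ⟨2 * m, hlast⟩).isLt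
      by_cases hc : a / 2 ≤ (v ⟨2 * m, hlast⟩ : ℕ)
      · rw [if_pos hc]
        simp only [ndist, Fin.val_mk]
        omega
      · rw [if_neg hc]
        simp only [ndist, Fin.val_mk]
        omega
    have hsum2 := even_bound m (by omega)
    have hmm : a / 2 * m + (a + 1) / 2 * m = a * m := by
      rw [← Nat.add_mul, show a / 2 + (a + 1) / 2 = a from by omega]
    rw [e1, e2, show n = 2 * m + 1 from by omega, Finset.sum_range_succ, Nat.mul_succ]
    linarith

end MetallicAux

open MetallicAux in
/-- the radius of `Π^a_n` equals `⌊a/2⌋·⌈n/2⌉ + ⌈a/2⌉·⌊n/2⌋`, and the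
constant string `ε̂` with `ε = ⌊a/2⌋` attains it. -/
theorem metallic_radius (a n : ℕ) (ha : 1 ≤ a) (hn : 1 ≤ n) :
    ecc a n ⟨fun _ => ⟨a / 2, Nat.lt_succ_of_le (Nat.div_le_self a 2)⟩,
        fun _ h => absurd h (Nat.ne_of_lt (Nat.div_lt_self ha one_lt_two))⟩ =
      a / 2 * ((n + 1) / 2) + (a + 1) / 2 * (n / 2) ∧
    ∀ v : MetallicVertex a n,
      a / 2 * ((n + 1) / 2) + (a + 1) / 2 * (n / 2) ≤ ecc a n v := by
  set c : MetallicVertex a n :=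
    ⟨fun _ => ⟨a / 2, Nat.lt_succ_of_le (Nat.div_le_self a 2)⟩,
      fun _ h => absurd h (Nat.ne_of_lt (Nat.div_lt_self ha one_lt_two))⟩ with hcdef
  have hcfun : ∀ i, (c.1 i : ℕ) = a / 2 := fun _ => rfl
  have hwalks := fun u => exists_walk_eps ha c hcfun u
  have hreach : ∀ u, (metallicCube a n).Reachable c u := fun u => ⟨(hwalks u).choose⟩
  have lower : ∀ v : MetallicVertex a n,
      a / 2 * ((n + 1) / 2) + (a + 1) / 2 * (n / 2) ≤ ecc a n v := by
    intro v
    set u : MetallicVertex a n := ⟨far a n v.1, far_ok ha v.1⟩ with hudef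
    have h1 : a / 2 * ((n + 1) / 2) + (a + 1) / 2 * (n / 2) ≤ L1 v.1 u.1 := far_low ha v.1
    have h2 : L1 v.1 u.1 ≤ (metallicCube a n).dist v u :=
      L1_le_dist ((hreach v).symm.trans (hreach u))
    have h3 : (metallicCube a n).dist v u ≤ ecc a n v :=
      Finset.le_sup (Finset.mem_univ u)
    omega
  refine ⟨le_antisymm ?_ (lower c), lower⟩
  refine Finset.sup_le fun u _ => ?_
  obtain ⟨p, hp⟩ := hwalks u
  calc (metallicCube a n).dist c u ≤ p.length := SimpleGraph.dist_le p
    _ = L1 c.1 u.1 := hp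
    _ ≤ a / 2 * ((n + 1) / 2) + (a + 1) / 2 * (n / 2) := L1_le_formula u.1 u.2
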